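/- For any integer p ≥ 2, any ε ∈ (0, 1/4], and any g₁, …, g_p ∈ SL_d(ℝ) satisfying κ_{1,2}(g_i) ≤ ε³, δ(X_{g_{i+1}}^M, Y_{g_i}^m) ≥ 2ε and δ(X_{g_i}^M, Y_{g_{i+1}}^m) ≥ 2ε for all i, the product satisfies κ₁(g_p⋯g₁) ≥ ε^{p−1} κ₁(g_p)⋯κ₁(g₁) and κ_{1,2}(g_p⋯g₁) ≤ κ_{1,2}(g₁)⋯κ_{1,2}(g_p)/ε^{2(p−1)}. -/

import Mathlib

noncomputable section

open scoped RealInnerProductSpace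

def op {d : ℕ} (g : Matrix (Fin d) (Fin d) ℝ) :
    EuclideanSpace ℝ (Fin d) →L[ℝ] EuclideanSpace ℝ (Fin d) :=
  Matrix.toEuclideanCLM (𝕜 := ℝ) g

/-- The norm `‖x ∧ y‖ = √(‖x‖²‖y‖² - ⟪x,y⟫²)` on `Λ²(ℝ^d)` for decomposable vectors. -/
def wnorm {d : ℕ} (x y : EuclideanSpace ℝ (Fin d)) : ℝ :=
  Real.sqrt (‖x‖ ^ 2 * ‖y‖ ^ 2 - ⟪x, y⟫ ^ 2)

/-- `κ₁(g) := ‖g‖`, the first singular value. -/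
def kappa1 {d : ℕ} (g : Matrix (Fin d) (Fin d) ℝ) : ℝ := ‖op g‖

/-- `κ_{1,2}(g) = κ₂(g)/κ₁(g) = ‖Λ²g‖/‖g‖²`, where
`‖Λ²g‖ = sup ‖gx ∧ gy‖/‖x ∧ y‖`. -/
def kappa12 {d : ℕ} (g : Matrix (Fin d) (Fin d) ℝ) : ℝ :=
  (⨆ q : EuclideanSpace ℝ (Fin d) × EuclideanSpace ℝ (Fin d),
      wnorm (op g q.1) (op g q.2) / wnorm q.1 q.2) / ‖op g‖ ^ 2

open Matrix

variable {d : ℕ}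


lemma op_apply (g : Matrix (Fin d) (Fin d) ℝ) (x : EuclideanSpace ℝ (Fin d)) (j : Fin d) :
    op g x j = g.mulVec x j := rfl

lemma op_mul (g h : Matrix (Fin d) (Fin d) ℝ) : op (g * h) = (op g).comp (op h) := by
  ext x; simp [op, _root_.map_mul]

lemma op_one : op (1 : Matrix (Fin d) (Fin d) ℝ) = ContinuousLinearMap.id ℝ _ := by
  ext x; simp [op]

lemma op_star (g : Matrix (Fin d) (Fin d) ℝ) :
    op gᵀ = ContinuousLinearMap.adjoint (op g) := by
  have := map_star (Matrix.toEuclideanCLM (𝕜 := ℝ) (n := Fin d)) g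
  simpa [op, Matrix.star_eq_conjTranspose, ContinuousLinearMap.star_eq_adjoint] using this

lemma inner_op_orth {g : Matrix (Fin d) (Fin d) ℝ} (hg : g ∈ Matrix.orthogonalGroup (Fin d) ℝ)
    (x y : EuclideanSpace ℝ (Fin d)) : ⟪op g x, op g y⟫ = ⟪x, y⟫ := by
  have h1 : gᵀ * g = 1 := by
    simpa [Matrix.star_eq_conjTranspose] using (Unitary.mem_iff.mp hg).1
  have h2 : op gᵀ (op g x) = x := by
    rw [← ContinuousLinearMap.comp_apply, ← op_mul, h1, op_one]; rfl
  rw [← ContinuousLinearMap.adjoint_inner_left, ← op_star, h2]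

lemma norm_op_orth {g : Matrix (Fin d) (Fin d) ℝ} (hg : g ∈ Matrix.orthogonalGroup (Fin d) ℝ)
    (x : EuclideanSpace ℝ (Fin d)) : ‖op g x‖ = ‖x‖ := by
  have := inner_op_orth hg x x
  rw [real_inner_self_eq_norm_sq, real_inner_self_eq_norm_sq] at this
  nlinarith [norm_nonneg (op g x), norm_nonneg x]



def W {d : ℕ} (x y : EuclideanSpace ℝ (Fin d)) : ℝ := ‖x‖ ^ 2 * ‖y‖ ^ 2 - ⟪x, y⟫ ^ 2

lemma W_nonneg (x y : EuclideanSpace ℝ (Fin d)) : 0 ≤ W x y := by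
  have h := abs_real_inner_le_norm x y
  have h2 : ⟪x, y⟫ ^ 2 ≤ (‖x‖ * ‖y‖)^2 := by
    rw [← sq_abs]
    exact pow_le_pow_left₀ (abs_nonneg _) h 2
  unfold W; nlinarith

lemma wnorm_eq (x y : EuclideanSpace ℝ (Fin d)) : wnorm x y = Real.sqrt (W x y) := rfl

lemma wnorm_nonneg (x y : EuclideanSpace ℝ (Fin d)) : 0 ≤ wnorm x y := Real.sqrt_nonneg _

lemma wnorm_sq (x y : EuclideanSpace ℝ (Fin d)) : wnorm x y ^ 2 = W x y := by
  rw [wnorm_eq, Real.sq_sqrt (W_nonneg x y)]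

lemma norm_sq_eq (x : EuclideanSpace ℝ (Fin d)) : ‖x‖ ^ 2 = ∑ i, x i ^ 2 := by
  rw [EuclideanSpace.norm_eq, Real.sq_sqrt (by positivity)]
  exact Finset.sum_congr rfl fun i _ => by rw [Real.norm_eq_abs, sq_abs]

lemma inner_eq (x y : EuclideanSpace ℝ (Fin d)) : ⟪x, y⟫ = ∑ i, x i * y i := by
  simp [PiLp.inner_apply, RCLike.inner_apply, mul_comm]

lemma lagrange_aux (x y : Fin d → ℝ) :
    (∑ i, x i^2) * (∑ i, y i^2) - (∑ i, x i * y i)^2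
      = (1/2) * ∑ i, ∑ j, (x i * y j - x j * y i)^2 := by
  have h : ∀ i : Fin d, ∑ j, (x i * y j - x j * y i)^2
      = x i^2 * (∑ j, y j^2) - (x i * y i) * (2 * ∑ j, x j * y j)
        + y i ^2 * (∑ j, x j ^2) := by
    intro i
    calc ∑ j, (x i * y j - x j * y i)^2
        = ∑ j, (x i^2 * y j^2 - (x i * y i) * (2 * (x j * y j)) + y i^2 * x j^2) :=
          Finset.sum_congr rfl fun j _ => by ring
      _ = _ := by
          rw [Finset.sum_add_distrib, Finset.sum_sub_distrib]
          simp only [← Finset.mul_sum]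
  simp_rw [h]
  rw [Finset.sum_add_distrib, Finset.sum_sub_distrib]
  simp only [← Finset.sum_mul]
  ring

lemma W_eq_sum (x y : EuclideanSpace ℝ (Fin d)) :
    W x y = (1/2) * ∑ i, ∑ j, (x i * y j - x j * y i)^2 := by
  rw [← lagrange_aux, W, norm_sq_eq, norm_sq_eq, inner_eq]



lemma W_smul_add (u v : EuclideanSpace ℝ (Fin d)) (c : ℝ) : W u (v + c • u) = W u v := by
  unfold W
  rw [inner_add_right, real_inner_smul_right, real_inner_self_eq_norm_sq,
    norm_add_sq_real, real_inner_smul_right, real_inner_comm v u, norm_smul,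
    Real.norm_eq_abs, mul_pow, sq_abs]
  ring

lemma W_le (x y : EuclideanSpace ℝ (Fin d)) : W x y ≤ (‖x‖ * ‖y‖) ^ 2 := by
  unfold W; nlinarith [sq_nonneg (⟪x, y⟫)]

example (u v : EuclideanSpace ℝ (Fin d)) (h : ⟪u, v⟫ = 0) : W u v = (‖u‖ * ‖v‖)^2 := by
  unfold W; rw [h]; ring


lemma wnorm_map_le (T : EuclideanSpace ℝ (Fin d) →L[ℝ] EuclideanSpace ℝ (Fin d))
    (x y : EuclideanSpace ℝ (Fin d)) : wnorm (T x) (T y) ≤ ‖T‖ ^ 2 * wnorm x y := by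
  by_cases hx : x = 0
  · subst hx
    have e : ∀ w : EuclideanSpace ℝ (Fin d), wnorm 0 w = 0 := by
      intro w; simp [wnorm]
    rw [map_zero, e, e, mul_zero]
  · set c : ℝ := ⟪x, y⟫ / ‖x‖ ^ 2 with hc
    have hnx : (0:ℝ) < ‖x‖ := norm_pos_iff.mpr hx
    set y' : EuclideanSpace ℝ (Fin d) := y - c • x with hy'
    have hyy : y = y' + c • x := by rw [hy']; abel
    have hperp : ⟪x, y'⟫ = 0 := by
      rw [hy', inner_sub_right, real_inner_smul_right, real_inner_self_eq_norm_sq, hc]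
      field_simp
      ring
    have hWxy : W x y = (‖x‖ * ‖y'‖) ^ 2 := by
      rw [hyy, W_smul_add]; unfold W; rw [hperp]; ring
    have hTy : T y = T y' + c • T x := by rw [hyy, map_add, T.map_smul]
    have hWT : W (T x) (T y) = W (T x) (T y') := by rw [hTy, W_smul_add]
    rw [wnorm_eq, hWT, wnorm_eq, hWxy, Real.sqrt_sq (by positivity)]
    calc Real.sqrt (W (T x) (T y')) ≤ Real.sqrt ((‖T x‖ * ‖T y'‖) ^ 2) :=
          Real.sqrt_le_sqrt (W_le _ _)
      _ = ‖T x‖ * ‖T y'‖ := Real.sqrt_sq (by positivity)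
      _ ≤ (‖T‖ * ‖x‖) * (‖T‖ * ‖y'‖) := by
          apply mul_le_mul (T.le_opNorm x) (T.le_opNorm y') (norm_nonneg _) (by positivity)
      _ = ‖T‖ ^ 2 * (‖x‖ * ‖y'‖) := by ring


lemma W_smul (s t : ℝ) (u v : EuclideanSpace ℝ (Fin d)) :
    W (s • u) (t • v) = s ^ 2 * t ^ 2 * W u v := by
  unfold W
  rw [norm_smul, norm_smul, real_inner_smul_left, real_inner_smul_right, Real.norm_eq_abs,
    Real.norm_eq_abs, mul_pow, mul_pow, sq_abs, sq_abs]
  ring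

lemma wnorm_smul (s t : ℝ) (hs : 0 ≤ s) (ht : 0 ≤ t) (u v : EuclideanSpace ℝ (Fin d)) :
    wnorm (s • u) (t • v) = s * t * wnorm u v := by
  rw [wnorm_eq, wnorm_eq, W_smul]
  rw [show s ^ 2 * t ^ 2 * W u v = (s * t) ^ 2 * W u v by ring, Real.sqrt_mul (by positivity),
    Real.sqrt_sq (by positivity)]

lemma W_orth {g : Matrix (Fin d) (Fin d) ℝ} (hg : g ∈ Matrix.orthogonalGroup (Fin d) ℝ)
    (x y : EuclideanSpace ℝ (Fin d)) : W (op g x) (op g y) = W x y := by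
  unfold W
  rw [norm_op_orth hg, norm_op_orth hg, inner_op_orth hg]

lemma wnorm_orth {g : Matrix (Fin d) (Fin d) ℝ} (hg : g ∈ Matrix.orthogonalGroup (Fin d) ℝ)
    (x y : EuclideanSpace ℝ (Fin d)) : wnorm (op g x) (op g y) = wnorm x y := by
  rw [wnorm_eq, wnorm_eq, W_orth hg]

lemma op_diagonal_apply (a : Fin d → ℝ) (x : EuclideanSpace ℝ (Fin d)) (i : Fin d) :
    op (Matrix.diagonal a) x i = a i * x i := by
  rw [op_apply, Matrix.mulVec_diagonal]

lemma W_diag_le (hd : 2 ≤ d) (a : Fin d → ℝ) (hmono : ∀ r s : Fin d, r ≤ s → a s ≤ a r)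
    (hpos : ∀ r, 0 ≤ a r) (x y : EuclideanSpace ℝ (Fin d)) :
    W (op (Matrix.diagonal a) x) (op (Matrix.diagonal a) y)
      ≤ (a ⟨0, by omega⟩ * a ⟨1, by omega⟩) ^ 2 * W x y := by
  set i0 : Fin d := ⟨0, by omega⟩
  set i1 : Fin d := ⟨1, by omega⟩
  rw [W_eq_sum, W_eq_sum]
  have main : (∑ i, ∑ j, (op (Matrix.diagonal a) x i * op (Matrix.diagonal a) y j
        - op (Matrix.diagonal a) x j * op (Matrix.diagonal a) y i) ^ 2)
      ≤ (a i0 * a i1) ^ 2 * ∑ i, ∑ j, (x i * y j - x j * y i) ^ 2 := by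
    rw [Finset.mul_sum]
    apply Finset.sum_le_sum
    intro i _
    rw [Finset.mul_sum]
    apply Finset.sum_le_sum
    intro j _
    simp only [op_diagonal_apply]
    have key : (a i * x i * (a j * y j) - a j * x j * (a i * y i)) ^ 2
        = (a i * a j) ^ 2 * (x i * y j - x j * y i) ^ 2 := by ring
    rw [key]
    rcases eq_or_ne i j with h | h
    · subst h; simp
    · apply mul_le_mul_of_nonneg_right _ (sq_nonneg _)
      have hij : a i * a j ≤ a i0 * a i1 := by
        rcases lt_or_gt_of_ne h with hlt | hlt
        · have h1 : a i ≤ a i0 := hmono i0 i (Fin.mk_le_of_le_val (by omega))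
          have h2 : a j ≤ a i1 := hmono i1 j (by
            have : (1 : ℕ) ≤ (j : ℕ) := by
              have := Fin.lt_iff_val_lt_val.mp hlt; omega
            exact Fin.mk_le_of_le_val this)
          exact mul_le_mul h1 h2 (hpos j) (hpos i0)
        · have h1 : a j ≤ a i0 := hmono i0 j (Fin.mk_le_of_le_val (by omega))
          have h2 : a i ≤ a i1 := hmono i1 i (by
            have : (1 : ℕ) ≤ (i : ℕ) := by
              have := Fin.lt_iff_val_lt_val.mp hlt; omega
            exact Fin.mk_le_of_le_val this)
          calc a i * a j = a j * a i := by ring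
            _ ≤ a i0 * a i1 := mul_le_mul h1 h2 (hpos i) (hpos i0)
      have h2 : (0:ℝ) ≤ a i * a j := mul_nonneg (hpos i) (hpos j)
      nlinarith
  linarith


lemma le_of_sq_le_sq' {x c : ℝ} (hx : 0 ≤ x) (hc : 0 ≤ c) (h : x^2 ≤ c^2) : x ≤ c := by
  nlinarith

lemma wnorm_diag_le (hd : 2 ≤ d) (a : Fin d → ℝ) (hmono : ∀ r s : Fin d, r ≤ s → a s ≤ a r)
    (hpos : ∀ r, 0 ≤ a r) (x y : EuclideanSpace ℝ (Fin d)) :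
    wnorm (op (Matrix.diagonal a) x) (op (Matrix.diagonal a) y)
      ≤ (a ⟨0, by omega⟩ * a ⟨1, by omega⟩) * wnorm x y := by
  rw [wnorm_eq, wnorm_eq]
  calc Real.sqrt (W (op (Matrix.diagonal a) x) (op (Matrix.diagonal a) y))
      ≤ Real.sqrt ((a ⟨0, by omega⟩ * a ⟨1, by omega⟩) ^ 2 * W x y) :=
        Real.sqrt_le_sqrt (W_diag_le hd a hmono hpos x y)
    _ = (a ⟨0, by omega⟩ * a ⟨1, by omega⟩) * Real.sqrt (W x y) := by
        rw [Real.sqrt_mul (by positivity), Real.sqrt_sq (mul_nonneg (hpos _) (hpos _))]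

lemma op_cartan (k D l : Matrix (Fin d) (Fin d) ℝ) (x : EuclideanSpace ℝ (Fin d)) :
    op (k * D * l) x = op k (op D (op l x)) := by
  rw [op_mul, op_mul]; rfl

lemma wnorm_cartan_le (hd : 2 ≤ d) {k l : Matrix (Fin d) (Fin d) ℝ} (a : Fin d → ℝ)
    (hk : k ∈ Matrix.orthogonalGroup (Fin d) ℝ) (hl : l ∈ Matrix.orthogonalGroup (Fin d) ℝ)
    (hmono : ∀ r s : Fin d, r ≤ s → a s ≤ a r) (hpos : ∀ r, 0 ≤ a r)
    (x y : EuclideanSpace ℝ (Fin d)) :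
    wnorm (op (k * Matrix.diagonal a * l) x) (op (k * Matrix.diagonal a * l) y)
      ≤ (a ⟨0, by omega⟩ * a ⟨1, by omega⟩) * wnorm x y := by
  rw [op_cartan, op_cartan, wnorm_orth hk]
  calc wnorm (op (Matrix.diagonal a) (op l x)) (op (Matrix.diagonal a) (op l y))
      ≤ (a ⟨0, by omega⟩ * a ⟨1, by omega⟩) * wnorm (op l x) (op l y) :=
        wnorm_diag_le hd a hmono hpos _ _
    _ = _ := by rw [wnorm_orth hl]

lemma norm_diag_le (hd : 1 ≤ d) (a : Fin d → ℝ) (hmono : ∀ r s : Fin d, r ≤ s → a s ≤ a r)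
    (hpos : ∀ r, 0 ≤ a r) (w : EuclideanSpace ℝ (Fin d)) :
    ‖op (Matrix.diagonal a) w‖ ≤ a ⟨0, by omega⟩ * ‖w‖ := by
  apply le_of_sq_le_sq' (norm_nonneg _) (mul_nonneg (hpos _) (norm_nonneg _))
  rw [mul_pow, norm_sq_eq, norm_sq_eq, Finset.mul_sum]
  apply Finset.sum_le_sum
  intro i _
  rw [op_diagonal_apply]
  have h1 : a i ≤ a ⟨0, by omega⟩ := hmono _ i (Fin.mk_le_of_le_val (by omega))
  have h2 : a i ^ 2 ≤ a ⟨0, by omega⟩ ^ 2 := by nlinarith [hpos i]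
  nlinarith [sq_nonneg (w i), h2]

lemma transpose_mem {l : Matrix (Fin d) (Fin d) ℝ} (hl : l ∈ Matrix.orthogonalGroup (Fin d) ℝ) :
    lᵀ ∈ Matrix.orthogonalGroup (Fin d) ℝ := by
  have := Unitary.star_mem hl
  simpa [Matrix.star_eq_conjTranspose] using this

lemma op_op_transpose {l : Matrix (Fin d) (Fin d) ℝ} (hl : l ∈ Matrix.orthogonalGroup (Fin d) ℝ)
    (x : EuclideanSpace ℝ (Fin d)) : op l (op lᵀ x) = x := by
  have hlT : l * lᵀ = 1 := by
    simpa [Matrix.star_eq_conjTranspose] using (Unitary.mem_iff.mp hl).2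
  rw [← ContinuousLinearMap.comp_apply, ← op_mul, hlT, op_one]; rfl

lemma diag_single (hd : 2 ≤ d) (a : Fin d → ℝ) (i : Fin d) :
    op (Matrix.diagonal a) (EuclideanSpace.single i 1) = a i • EuclideanSpace.single i 1 := by
  ext j
  rw [op_diagonal_apply]
  have : (a i • EuclideanSpace.single i (1:ℝ)) j = a i * EuclideanSpace.single i (1:ℝ) j := rfl
  rw [this, EuclideanSpace.single_apply]
  rcases eq_or_ne j i with h | h
  · subst h; simp
  · simp [h]

lemma opnorm_cartan (hd : 2 ≤ d) {k l : Matrix (Fin d) (Fin d) ℝ} (a : Fin d → ℝ)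
    (hk : k ∈ Matrix.orthogonalGroup (Fin d) ℝ) (hl : l ∈ Matrix.orthogonalGroup (Fin d) ℝ)
    (hmono : ∀ r s : Fin d, r ≤ s → a s ≤ a r) (hpos : ∀ r, 0 ≤ a r) :
    ‖op (k * Matrix.diagonal a * l)‖ = a ⟨0, by omega⟩ := by
  set i0 : Fin d := ⟨0, by omega⟩
  set e0 : EuclideanSpace ℝ (Fin d) := EuclideanSpace.single i0 1 with he0
  have hne0 : ‖e0‖ = 1 := by rw [he0, EuclideanSpace.norm_single, norm_one]
  apply le_antisymm
  · apply ContinuousLinearMap.opNorm_le_bound _ (hpos i0)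
    intro x
    rw [op_cartan, norm_op_orth hk]
    calc ‖op (Matrix.diagonal a) (op l x)‖ ≤ a i0 * ‖op l x‖ :=
          norm_diag_le (by omega) a hmono hpos _
      _ = a i0 * ‖x‖ := by rw [norm_op_orth hl]
  · have hv : op (k * Matrix.diagonal a * l) (op lᵀ e0) = a i0 • op k e0 := by
      rw [op_cartan, op_op_transpose hl, diag_single hd, ContinuousLinearMap.map_smul]
    have hnv : ‖op (k * Matrix.diagonal a * l) (op lᵀ e0)‖ = a i0 := by
      rw [hv, norm_smul, Real.norm_eq_abs, abs_of_nonneg (hpos i0), norm_op_orth hk, hne0,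
        mul_one]
    calc a i0 = ‖op (k * Matrix.diagonal a * l) (op lᵀ e0)‖ := hnv.symm
      _ ≤ ‖op (k * Matrix.diagonal a * l)‖ * ‖op lᵀ e0‖ :=
          ContinuousLinearMap.le_opNorm _ _
      _ = ‖op (k * Matrix.diagonal a * l)‖ := by
          rw [norm_op_orth (transpose_mem hl), hne0, mul_one]


def Sfn {d : ℕ} (g : Matrix (Fin d) (Fin d) ℝ) : ℝ :=
  ⨆ q : EuclideanSpace ℝ (Fin d) × EuclideanSpace ℝ (Fin d),
      wnorm (op g q.1) (op g q.2) / wnorm q.1 q.2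

lemma kappa12_eq_Sfn (g : Matrix (Fin d) (Fin d) ℝ) : kappa12 g = Sfn g / ‖op g‖ ^ 2 := rfl

lemma ratio_le_opnorm_sq (g : Matrix (Fin d) (Fin d) ℝ)
    (q : EuclideanSpace ℝ (Fin d) × EuclideanSpace ℝ (Fin d)) :
    wnorm (op g q.1) (op g q.2) / wnorm q.1 q.2 ≤ ‖op g‖ ^ 2 := by
  rcases (wnorm_nonneg q.1 q.2).eq_or_lt with h0 | h0
  · rw [← h0, div_zero]; positivity
  · rw [div_le_iff₀ h0]; exact wnorm_map_le (op g) q.1 q.2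

lemma Sfn_bdd (g : Matrix (Fin d) (Fin d) ℝ) :
    BddAbove (Set.range fun q : EuclideanSpace ℝ (Fin d) × EuclideanSpace ℝ (Fin d) =>
      wnorm (op g q.1) (op g q.2) / wnorm q.1 q.2) :=
  ⟨‖op g‖ ^ 2, by rintro _ ⟨q, rfl⟩; exact ratio_le_opnorm_sq g q⟩

lemma ratio_le_Sfn (g : Matrix (Fin d) (Fin d) ℝ)
    (q : EuclideanSpace ℝ (Fin d) × EuclideanSpace ℝ (Fin d)) :
    wnorm (op g q.1) (op g q.2) / wnorm q.1 q.2 ≤ Sfn g :=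
  le_ciSup (Sfn_bdd g) q

lemma Sfn_nonneg (g : Matrix (Fin d) (Fin d) ℝ) : 0 ≤ Sfn g := by
  have h := ratio_le_Sfn g (0, 0)
  simpa [wnorm] using h

lemma Sfn_le {g : Matrix (Fin d) (Fin d) ℝ} {C : ℝ} (hC : 0 ≤ C)
    (h : ∀ x y, wnorm (op g x) (op g y) ≤ C * wnorm x y) : Sfn g ≤ C := by
  apply ciSup_le
  intro q
  rcases (wnorm_nonneg q.1 q.2).eq_or_lt with h0 | h0
  · rw [← h0, div_zero]; exact hC
  · rw [div_le_iff₀ h0]; exact h q.1 q.2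

lemma Sfn_submul (g h : Matrix (Fin d) (Fin d) ℝ) : Sfn (g * h) ≤ Sfn g * Sfn h := by
  apply ciSup_le
  intro q
  have h2 : op (g * h) q.1 = op g (op h q.1) := by rw [op_mul]; rfl
  have h3 : op (g * h) q.2 = op g (op h q.2) := by rw [op_mul]; rfl
  rcases (wnorm_nonneg q.1 q.2).eq_or_lt with h0 | h0
  · rw [← h0, div_zero]; exact mul_nonneg (Sfn_nonneg g) (Sfn_nonneg h)
  rcases (wnorm_nonneg (op h q.1) (op h q.2)).eq_or_lt with h1 | h1
  · have hnum : wnorm (op (g * h) q.1) (op (g * h) q.2) = 0 := by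
      have hb := wnorm_map_le (op g) (op h q.1) (op h q.2)
      rw [← h1, mul_zero] at hb
      rw [h2, h3]
      exact le_antisymm hb (wnorm_nonneg _ _)
    rw [hnum, zero_div]
    exact mul_nonneg (Sfn_nonneg g) (Sfn_nonneg h)
  · rw [h2, h3, show wnorm (op g (op h q.1)) (op g (op h q.2)) / wnorm q.1 q.2
        = (wnorm (op g (op h q.1)) (op g (op h q.2)) / wnorm (op h q.1) (op h q.2))
          * (wnorm (op h q.1) (op h q.2) / wnorm q.1 q.2) from by
        field_simp]
    exact mul_le_mul (ratio_le_Sfn g (op h q.1, op h q.2)) (ratio_le_Sfn h q)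
      (div_nonneg (wnorm_nonneg _ _) (le_of_lt h0)) (Sfn_nonneg g)

lemma Sfn_cartan (hd : 2 ≤ d) {k l : Matrix (Fin d) (Fin d) ℝ} (a : Fin d → ℝ)
    (hk : k ∈ Matrix.orthogonalGroup (Fin d) ℝ) (hl : l ∈ Matrix.orthogonalGroup (Fin d) ℝ)
    (hmono : ∀ r s : Fin d, r ≤ s → a s ≤ a r) (hpos : ∀ r, 0 ≤ a r) :
    Sfn (k * Matrix.diagonal a * l) = a ⟨0, by omega⟩ * a ⟨1, by omega⟩ := by
  set i0 : Fin d := ⟨0, by omega⟩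
  set i1 : Fin d := ⟨1, by omega⟩
  set e0 : EuclideanSpace ℝ (Fin d) := EuclideanSpace.single i0 1 with he0
  set e1 : EuclideanSpace ℝ (Fin d) := EuclideanSpace.single i1 1 with he1
  apply le_antisymm
  · exact Sfn_le (mul_nonneg (hpos _) (hpos _)) (wnorm_cartan_le hd a hk hl hmono hpos)
  · have hx : op (k * Matrix.diagonal a * l) (op lᵀ e0) = a i0 • op k e0 := by
      rw [op_cartan, op_op_transpose hl, diag_single hd, ContinuousLinearMap.map_smul]
    have hy : op (k * Matrix.diagonal a * l) (op lᵀ e1) = a i1 • op k e1 := by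
      rw [op_cartan, op_op_transpose hl, diag_single hd, ContinuousLinearMap.map_smul]
    have hne : i0 ≠ i1 := by simp [Fin.ext_iff]
    have hwe : wnorm e0 e1 = 1 := by
      rw [wnorm_eq]
      have h1 : ⟪e0, e1⟫ = 0 := by
        rw [he0, he1, EuclideanSpace.inner_single_left]
        simp [EuclideanSpace.single_apply, hne]
      unfold W
      rw [h1, he0, he1, EuclideanSpace.norm_single, EuclideanSpace.norm_single]
      norm_num
    have hkw : wnorm (op k e0) (op k e1) = 1 := by rw [wnorm_orth hk, hwe]
    have hden : wnorm (op lᵀ e0) (op lᵀ e1) = 1 := by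
      rw [wnorm_orth (transpose_mem hl), hwe]
    have hr := ratio_le_Sfn (k * Matrix.diagonal a * l) (op lᵀ e0, op lᵀ e1)
    simp only at hr
    rw [hx, hy, hden, div_one, wnorm_smul _ _ (hpos i0) (hpos i1), hkw, mul_one] at hr
    exact hr

lemma det_orth {g : Matrix (Fin d) (Fin d) ℝ} (hg : g ∈ Matrix.orthogonalGroup (Fin d) ℝ) :
    g.det = 1 ∨ g.det = -1 := by
  have h1 : gᵀ * g = 1 := by
    simpa [Matrix.star_eq_conjTranspose] using (Unitary.mem_iff.mp hg).1
  have h2 : g.det * g.det = 1 := by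
    have := congrArg Matrix.det h1
    rwa [Matrix.det_mul, Matrix.det_transpose, Matrix.det_one] at this
  rcases mul_self_eq_one_iff.mp h2 with h | h
  · exact Or.inl h
  · exact Or.inr h

lemma abs_coord_le_norm (x : EuclideanSpace ℝ (Fin d)) (j : Fin d) : |x j| ≤ ‖x‖ := by
  apply le_of_sq_le_sq' (abs_nonneg _) (norm_nonneg _)
  rw [sq_abs, norm_sq_eq]
  exact Finset.single_le_sum (f := fun i => x i ^ 2) (fun i _ => sq_nonneg _) (Finset.mem_univ j)

def Qprod {d : ℕ} (G : ℕ → Matrix (Fin d) (Fin d) ℝ) : ℕ → Matrix (Fin d) (Fin d) ℝ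
  | 0 => 1
  | n + 1 => G n * Qprod G n

lemma Qprod_succ {d : ℕ} (G : ℕ → Matrix (Fin d) (Fin d) ℝ) (n : ℕ) :
    Qprod G (n + 1) = G n * Qprod G n := rfl


lemma sq_le_sq'' {a b : ℝ} (ha : 0 ≤ a) (hab : a ≤ b) : a^2 ≤ b^2 := by nlinarith

lemma arith_clow {ε s c : ℝ} (hε0 : 0 < ε) (hε4 : ε ≤ 1/4) (hspos : 0 < s)
    (hb : (1-ε^4)*s^2 ≤ c^2) : (1-ε^2/2)*s ≤ |c| := by
  have hε16 : ε^2 ≤ 1/16 := by nlinarith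
  have key2 : (1 - ε^2/2)^2 ≤ 1 - ε^4 := by nlinarith [hε16, sq_nonneg ε]
  have h3 : ((1-ε^2/2)*s)^2 ≤ c^2 := by
    calc ((1-ε^2/2)*s)^2 = (1-ε^2/2)^2 * s^2 := by ring
      _ ≤ (1-ε^4) * s^2 := mul_le_mul_of_nonneg_right key2 (sq_nonneg s)
      _ ≤ c^2 := hb
  have h4 : 0 ≤ (1 - ε^2/2) * s := by nlinarith
  apply le_of_sq_le_sq' h4 (abs_nonneg c)
  rw [sq_abs]
  exact h3

lemma arith_diff {ε s c σ : ℝ} (hσc : σ*c = |c|) (hσsq : σ^2 = 1)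
    (hclow : (1-ε^2/2)*s ≤ |c|) (hspos : 0 < s) :
    s^2 - 2*(σ*s)*c + (σ*s)^2 ≤ (ε*s)^2 := by
  have hterm : (σ*s)^2 = s^2 := by rw [mul_pow, hσsq, one_mul]
  have hterm2 : 2*(σ*s)*c = 2*(s*|c|) := by
    calc 2*(σ*s)*c = 2*(s*(σ*c)) := by ring
      _ = 2*(s*|c|) := by rw [hσc]
  rw [hterm, hterm2]
  have h1 : s * ((1 - ε^2/2) * s) ≤ s * |c| := mul_le_mul_of_nonneg_left hclow hspos.le
  nlinarith [h1]

lemma arith_final {ε a0 a1 s t D2 : ℝ} (hε0 : 0 < ε) (hε4 : ε ≤ 1/4)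
    (hD : D2 ≤ a0^2*t^2 + a1^2*(s^2 - t^2)) (hts : t^2 ≤ s^2)
    (hte : ε*s ≤ |t|) (h12 : a1 ≤ ε^3*a0) (ha1 : 0 ≤ a1) (hs : 0 < s) :
    (1-ε^4)*D2 ≤ (a0*t)^2 := by
  have hεsq : ε^2 ≤ 1 := by nlinarith
  have hw0e : ε^2*s^2 ≤ t^2 := by
    have h0 : 0 ≤ ε*s := by positivity
    calc ε^2*s^2 = (ε*s)^2 := by ring
      _ ≤ |t|^2 := sq_le_sq'' h0 hte
      _ = t^2 := sq_abs t
  have ha1sq : a1^2 ≤ ε^6 * a0^2 := by nlinarith [pow_pos hε0 3]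
  have e1 : a1^2 * (s^2 - t^2) ≤ ε^6 * a0^2 * s^2 := by
    nlinarith [ha1sq, sq_nonneg t, sq_nonneg s, sq_nonneg a1]
  have e2 : ε^6 * a0^2 * s^2 ≤ ε^4 * (a0^2 * t^2) := by
    nlinarith [hw0e, mul_nonneg (pow_nonneg hε0.le 4) (sq_nonneg a0)]
  have e3 : D2 ≤ (1+ε^4) * (a0^2 * t^2) := by nlinarith [hD, e1, e2]
  have e4 : (0:ℝ) ≤ a0^2 * t^2 := by positivity
  have hε41 : (1:ℝ) - ε^4 ≥ 0 := by nlinarith [hεsq, sq_nonneg ε]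
  have e5 : (1-ε^4) * D2 ≤ (1-ε^4)*((1+ε^4)*(a0^2*t^2)) := mul_le_mul_of_nonneg_left e3 hε41
  have e6 : (1-ε^4)*((1+ε^4)*(a0^2*t^2)) ≤ a0^2*t^2 := by
    nlinarith [e4, mul_nonneg (mul_nonneg (pow_nonneg hε0.le 4) (pow_nonneg hε0.le 4)) e4]
  calc (1-ε^4)*D2 ≤ a0^2*t^2 := le_trans e5 e6
    _ = (a0*t)^2 := by ring

set_option maxHeartbeats 2000000 in
lemma key (hd : 2 ≤ d) (p : ℕ) (hp : 1 ≤ p) (ε : ℝ) (hε0 : 0 < ε) (hε4 : ε ≤ 1/4)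
    (G KK LL : ℕ → Matrix (Fin d) (Fin d) ℝ) (A : ℕ → Fin d → ℝ)
    (hk : ∀ n < p, KK n ∈ Matrix.orthogonalGroup (Fin d) ℝ)
    (hl : ∀ n < p, LL n ∈ Matrix.orthogonalGroup (Fin d) ℝ)
    (hdec : ∀ n < p, G n = KK n * Matrix.diagonal (A n) * LL n)
    (hmono : ∀ n < p, ∀ r s : Fin d, r ≤ s → A n s ≤ A n r)
    (hpos : ∀ n < p, ∀ r, 0 ≤ A n r)
    (hA1 : ∀ n < p, 1 ≤ A n ⟨0, by omega⟩)
    (h12 : ∀ n < p, A n ⟨1, by omega⟩ ≤ ε ^ 3 * A n ⟨0, by omega⟩)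
    (hδ : ∀ n, n + 1 < p →
      2 * ε ≤ |op (LL (n+1)) (op (KK n) (EuclideanSpace.single ⟨0, by omega⟩ 1)) ⟨0, by omega⟩|) :
    ε ^ (p - 1) * ∏ j ∈ Finset.range p, A j ⟨0, by omega⟩
      ≤ ‖op (Qprod G p) (op (LL 0)ᵀ (EuclideanSpace.single ⟨0, by omega⟩ 1))‖ := by
  set i0 : Fin d := ⟨0, by omega⟩
  set i1 : Fin d := ⟨1, by omega⟩
  set e0 : EuclideanSpace ℝ (Fin d) := EuclideanSpace.single i0 1 with he0
  set v : EuclideanSpace ℝ (Fin d) := op (LL 0)ᵀ e0 with hv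
  have hεsq : ε ^ 2 ≤ 1 := by nlinarith
  have main : ∀ n, 1 ≤ n → n ≤ p →
      ε ^ (n - 1) * ∏ j ∈ Finset.range n, A j i0 ≤ ‖op (Qprod G n) v‖ ∧
        (1 - ε ^ 4) * ‖op (Qprod G n) v‖ ^ 2 ≤ ⟪op (KK (n-1)) e0, op (Qprod G n) v⟫ ^ 2 := by
    intro n hn
    induction n, hn using Nat.le_induction with
    | base =>
      intro hnp
      have h0p : 0 < p := by omega
      have hu1 : op (Qprod G 1) v = A 0 i0 • op (KK 0) e0 := by
        have hq1 : Qprod G 1 = G 0 := by rw [Qprod_succ]; simp [Qprod]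
        rw [hq1, hdec 0 h0p, hv, op_cartan, op_op_transpose (hl 0 h0p), diag_single hd,
          ContinuousLinearMap.map_smul]
      have hk0 : ‖op (KK 0) e0‖ = 1 := by
        rw [norm_op_orth (hk 0 h0p), he0, EuclideanSpace.norm_single, norm_one]
      have hnorm1 : ‖op (Qprod G 1) v‖ = A 0 i0 := by
        rw [hu1, norm_smul, Real.norm_eq_abs, abs_of_nonneg (hpos 0 h0p i0), hk0, mul_one]
      constructor
      · rw [hnorm1]; simp
      · have hinner : ⟪op (KK 0) e0, op (Qprod G 1) v⟫ = A 0 i0 := by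
          rw [hu1, real_inner_smul_right, real_inner_self_eq_norm_sq, hk0]
          norm_num
        rw [show (1:ℕ) - 1 = 0 from rfl, hinner, hnorm1]
        nlinarith [sq_nonneg (ε^2 * A 0 i0)]
    | succ n hn ih =>
      intro hnp
      have hnp' : n < p := by omega
      obtain ⟨ha, hb⟩ := ih (by omega)
      set u : EuclideanSpace ℝ (Fin d) := op (Qprod G n) v with hu
      set s : ℝ := ‖u‖ with hs
      set c : ℝ := ⟪op (KK (n-1)) e0, u⟫ with hc
      have hprodpos : (0:ℝ) < ∏ j ∈ Finset.range n, A j i0 := by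
        apply Finset.prod_pos
        intro j hj
        have hjp : j < p := by have := Finset.mem_range.mp hj; omega
        linarith [hA1 j hjp]
      have hspos : 0 < s := lt_of_lt_of_le (by positivity) ha
      set z : EuclideanSpace ℝ (Fin d) := op (KK (n-1)) e0 with hz
      have hn1p : n - 1 < p := by omega
      have hznorm : ‖z‖ = 1 := by
        rw [hz, norm_op_orth (hk _ hn1p), he0, EuclideanSpace.norm_single, norm_one]
      have hcs : |c| ≤ s := by
        calc |c| ≤ ‖z‖ * ‖u‖ := abs_real_inner_le_norm z u
          _ = s := by rw [hznorm, one_mul]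
      have hclow : (1 - ε^2/2) * s ≤ |c| := arith_clow hε0 hε4 hspos hb
      set σ : ℝ := if 0 ≤ c then 1 else -1 with hσ
      have hσc : σ * c = |c| := by
        rcases le_or_gt 0 c with h | h
        · rw [hσ, if_pos h, one_mul, abs_of_nonneg h]
        · rw [hσ, if_neg (not_le.mpr h), abs_of_neg h]; ring
      have hσsq : σ^2 = 1 := by
        rcases le_or_gt 0 c with h | h
        · rw [hσ, if_pos h]; norm_num
        · rw [hσ, if_neg (not_le.mpr h)]; norm_num
      have hdiff : ‖u - (σ * s) • z‖ ≤ ε * s := by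
        apply le_of_sq_le_sq' (norm_nonneg _) (by positivity)
        have hexp : ‖u - (σ*s) • z‖^2 = s^2 - 2*(σ*s)*c + (σ*s)^2 := by
          rw [norm_sub_sq_real, real_inner_smul_right, norm_smul, Real.norm_eq_abs,
            real_inner_comm, ← hc, mul_pow, sq_abs, hznorm]
          ring
        rw [hexp]
        exact arith_diff hσc hσsq hclow hspos
      have hδn' := hδ (n-1) (by omega)
      rw [show n - 1 + 1 = n from by omega] at hδn'
      set w : EuclideanSpace ℝ (Fin d) := op (LL n) u with hw
      have hwnorm : ‖w‖ = s := by rw [hw, norm_op_orth (hl n hnp'), hs]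
      have hwt : ε * s ≤ |w i0| := by
        have hdecu : u = (σ*s) • z + (u - (σ*s)•z) := by abel
        have hlin : w i0 = (σ * s) * (op (LL n) z i0) + (op (LL n) (u - (σ*s)•z)) i0 := by
          rw [hw]
          conv_lhs => rw [hdecu]
          rw [map_add, ContinuousLinearMap.map_smul]
          rfl
        have h2 : |(op (LL n) (u - (σ*s)•z)) i0| ≤ ε * s :=
          le_trans (abs_coord_le_norm _ _) (by rw [norm_op_orth (hl n hnp')]; exact hdiff)
        have h3 : |(σ*s) * (op (LL n) z i0)| = s * |op (LL n) z i0| := by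
          rw [abs_mul, abs_mul]
          have : |σ| = 1 := by
            rcases le_or_gt 0 c with h | h
            · rw [hσ, if_pos h]; norm_num
            · rw [hσ, if_neg (not_le.mpr h)]; norm_num
          rw [this, one_mul, abs_of_pos hspos]
        have h4 : |(σ*s) * (op (LL n) z i0)| - |(op (LL n) (u - (σ*s)•z)) i0| ≤ |w i0| := by
          rw [hlin]
          have := abs_add_le ((σ*s) * (op (LL n) z i0) + (op (LL n) (u - (σ*s)•z)) i0)
            (-((op (LL n) (u - (σ*s)•z)) i0))
          simp only [add_neg_cancel_right, abs_neg] at this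
          linarith
        have h5 : s * (2*ε) ≤ s * |op (LL n) z i0| :=
          mul_le_mul_of_nonneg_left hδn' hspos.le
        rw [h3] at h4
        linarith
      set Dw : EuclideanSpace ℝ (Fin d) := op (Matrix.diagonal (A n)) w with hDw
      have hun1 : op (Qprod G (n+1)) v = op (KK n) Dw := by
        have : op (Qprod G (n+1)) v = op (G n) u := by
          rw [Qprod_succ, op_mul, ContinuousLinearMap.comp_apply, hu]
        rw [this, hdec n hnp', op_cartan, ← hw, ← hDw]
      have hnormDw : ‖op (Qprod G (n+1)) v‖ = ‖Dw‖ := by rw [hun1, norm_op_orth (hk n hnp')]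
      have hDwi0 : Dw i0 = A n i0 * w i0 := op_diagonal_apply _ _ _
      have hlow : A n i0 * |w i0| ≤ ‖Dw‖ := by
        calc A n i0 * |w i0| = |Dw i0| := by
              rw [hDwi0, abs_mul, abs_of_nonneg (hpos n hnp' i0)]
          _ ≤ ‖Dw‖ := abs_coord_le_norm _ _
      have hA0pos : (0:ℝ) < A n i0 := by linarith [hA1 n hnp']
      have hna : ε ^ (n+1-1) * ∏ j ∈ Finset.range (n+1), A j i0 ≤ ‖op (Qprod G (n+1)) v‖ := by
        rw [hnormDw, Finset.prod_range_succ, show n+1-1 = n from rfl]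
        have hεn : ε^n = ε^(n-1) * ε := by
          rw [← pow_succ]
          congr 1
          omega
        calc ε^n * ((∏ j ∈ Finset.range n, A j i0) * A n i0)
            = A n i0 * (ε * (ε^(n-1) * ∏ j ∈ Finset.range n, A j i0)) := by rw [hεn]; ring
          _ ≤ A n i0 * (ε * s) := by
              apply mul_le_mul_of_nonneg_left _ hA0pos.le
              exact mul_le_mul_of_nonneg_left ha hε0.le
          _ ≤ A n i0 * |w i0| := mul_le_mul_of_nonneg_left hwt hA0pos.le
          _ ≤ ‖Dw‖ := hlow
      refine ⟨hna, ?_⟩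
      have hcnew : ⟪op (KK (n+1-1)) e0, op (Qprod G (n+1)) v⟫ = A n i0 * w i0 := by
        rw [show n+1-1 = n from rfl, hun1, inner_op_orth (hk n hnp'), he0,
          EuclideanSpace.inner_single_left, ← hDwi0]
        simp
      rw [hcnew, hnormDw]
      have hDwsq : ‖Dw‖^2 ≤ (A n i0)^2 * (w i0)^2 + (A n i1)^2 * (s^2 - (w i0)^2) := by
        rw [norm_sq_eq]
        have hterm : ∀ j : Fin d, Dw j ^ 2 = (A n j * w j)^2 := fun j => by
          rw [hDw, op_diagonal_apply]
        rw [Finset.sum_congr rfl fun j _ => hterm j,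
          ← Finset.add_sum_erase _ (fun j => (A n j * w j)^2) (Finset.mem_univ i0)]
        have hrest : ∑ j ∈ Finset.univ.erase i0, (A n j * w j)^2
            ≤ (A n i1)^2 * ∑ j ∈ Finset.univ.erase i0, (w j)^2 := by
          rw [Finset.mul_sum]
          apply Finset.sum_le_sum
          intro j hj
          have hji : j ≠ i0 := Finset.ne_of_mem_erase hj
          have hj1 : i1 ≤ j := by
            apply Fin.mk_le_of_le_val
            have : (j:ℕ) ≠ 0 := fun hcon => hji (Fin.ext hcon)
            omega
          have hAj : A n j ≤ A n i1 := hmono n hnp' i1 j hj1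
          have hsq : (A n j)^2 ≤ (A n i1)^2 := sq_le_sq'' (hpos n hnp' j) hAj
          calc (A n j * w j)^2 = (A n j)^2 * (w j)^2 := by ring
            _ ≤ (A n i1)^2 * (w j)^2 := mul_le_mul_of_nonneg_right hsq (sq_nonneg _)
        have hsum : ∑ j ∈ Finset.univ.erase i0, (w j)^2 = s^2 - (w i0)^2 := by
          have : ∑ j, (w j)^2 = s^2 := by rw [← hwnorm, norm_sq_eq]
          rw [← this, ← Finset.add_sum_erase _ (fun j => (w j)^2) (Finset.mem_univ i0)]
          ring
        rw [hsum] at hrest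
        nlinarith [sq_nonneg (w i0)]
      have hw0s : (w i0)^2 ≤ s^2 := by
        have h1 := abs_coord_le_norm w i0
        rw [hwnorm] at h1
        calc (w i0)^2 = |w i0|^2 := (sq_abs _).symm
          _ ≤ s^2 := sq_le_sq'' (abs_nonneg _) h1
      exact arith_final hε0 hε4 hDwsq hw0s hwt (h12 n hnp') (hpos n hnp' i1) hspos
  exact (main p hp le_rfl).1

set_option maxHeartbeats 2000000 in
/-- For `p ≥ 2`, `ε ∈ (0, 1/4]`, and `g₁, …, g_p ∈ SL_d(ℝ)` (with Cartan decompositions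
`gᵢ = kᵢ (diagonal aᵢ) lᵢ`) with `κ_{1,2}(gᵢ) ≤ ε³`, `δ(X_{g_{i+1}}^M, Y_{g_i}^m) ≥ 2ε`
and `δ(X_{g_i}^M, Y_{g_{i+1}}^m) ≥ 2ε`, the product `g_p ⋯ g₁` satisfies
`κ₁(g_p⋯g₁) ≥ ε^{p-1} κ₁(g_p)⋯κ₁(g₁)` and
`κ_{1,2}(g_p⋯g₁) ≤ κ_{1,2}(g₁)⋯κ_{1,2}(g_p) / ε^{2(p-1)}`. -/
theorem stmt3 {d : ℕ} (hd : 2 ≤ d) (p : ℕ) (hp : 2 ≤ p)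
    (ε : ℝ) (hε : ε ∈ Set.Ioc (0 : ℝ) (1/4))
    (g k l : Fin p → Matrix (Fin d) (Fin d) ℝ) (a : Fin p → Fin d → ℝ)
    (hg : ∀ i, (g i).det = 1)
    (hk : ∀ i, k i ∈ Matrix.orthogonalGroup (Fin d) ℝ)
    (hl : ∀ i, l i ∈ Matrix.orthogonalGroup (Fin d) ℝ)
    (hdecomp : ∀ i, g i = k i * Matrix.diagonal (a i) * l i)
    (hmono : ∀ i, ∀ r s : Fin d, r ≤ s → a i s ≤ a i r)
    (hpos : ∀ i r, 0 ≤ a i r)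
    (h12 : ∀ i, kappa12 (g i) ≤ ε ^ 3)
    (hδ₁ : ∀ (i : Fin p) (h : (i : ℕ) + 1 < p),
      2 * ε ≤ |op (l i) (op (k ⟨(i : ℕ) + 1, h⟩)
        (EuclideanSpace.single ⟨0, by omega⟩ 1)) ⟨0, by omega⟩|)
    (hδ₂ : ∀ (i : Fin p) (h : (i : ℕ) + 1 < p),
      2 * ε ≤ |op (l ⟨(i : ℕ) + 1, h⟩) (op (k i)
        (EuclideanSpace.single ⟨0, by omega⟩ 1)) ⟨0, by omega⟩|) :
    ε ^ (p - 1) * ∏ i : Fin p, kappa1 (g i) ≤ kappa1 ((List.ofFn g).reverse.prod) ∧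
      kappa12 ((List.ofFn g).reverse.prod) ≤ (∏ i : Fin p, kappa12 (g i)) / ε ^ (2 * (p - 1)) := by
  obtain ⟨hε0, hε4⟩ := hε
  have hp1 : 1 ≤ p := by omega
  set i0 : Fin d := ⟨0, by omega⟩ with hi0
  set i1 : Fin d := ⟨1, by omega⟩ with hi1
  set G : ℕ → Matrix (Fin d) (Fin d) ℝ :=
    fun n => if h : n < p then g ⟨n, h⟩ else 1 with hG
  set KK : ℕ → Matrix (Fin d) (Fin d) ℝ :=
    fun n => if h : n < p then k ⟨n, h⟩ else 1 with hKK
  set LL : ℕ → Matrix (Fin d) (Fin d) ℝ :=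
    fun n => if h : n < p then l ⟨n, h⟩ else 1 with hLL
  set A : ℕ → Fin d → ℝ :=
    fun n r => if h : n < p then a ⟨n, h⟩ r else 1 with hA
  -- determinant lower bound on a i i0
  have ha0 : ∀ i : Fin p, 1 ≤ a i i0 := by
    intro i
    have h1 : (1:ℝ) = (k i).det * ((∏ r, a i r) * (l i).det) := by
      rw [← hg i, hdecomp i, Matrix.det_mul, Matrix.det_mul, Matrix.det_diagonal, mul_assoc]
    have hnn : 0 ≤ ∏ r, a i r := Finset.prod_nonneg fun r _ => hpos i r
    have hprod1 : ∏ r, a i r = 1 := by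
      rcases det_orth (hk i) with hk1 | hk1 <;> rcases det_orth (hl i) with hl1 | hl1 <;>
        rw [hk1, hl1] at h1 <;> nlinarith [hnn]
    have hle : ∏ r, a i r ≤ (a i i0) ^ d := by
      calc ∏ r, a i r ≤ ∏ _r : Fin d, a i i0 :=
            Finset.prod_le_prod (fun r _ => hpos i r)
              (fun r _ => hmono i i0 r (Fin.mk_le_of_le_val (Nat.zero_le _)))
        _ = (a i i0) ^ d := by rw [Finset.prod_const, Finset.card_univ, Fintype.card_fin]
    by_contra hcon
    push_neg at hcon
    have : (a i i0) ^ d < 1 := pow_lt_one₀ (hpos i i0) hcon (by omega)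
    rw [hprod1] at hle
    linarith
  have hk1eq : ∀ i : Fin p, kappa1 (g i) = a i i0 := by
    intro i
    rw [kappa1, hdecomp i, opnorm_cartan hd (a i) (hk i) (hl i) (hmono i) (hpos i)]
  have hk12eq : ∀ i : Fin p, kappa12 (g i) = (a i i0 * a i i1) / (a i i0) ^ 2 := by
    intro i
    rw [kappa12_eq_Sfn, hdecomp i, Sfn_cartan hd (a i) (hk i) (hl i) (hmono i) (hpos i),
      opnorm_cartan hd (a i) (hk i) (hl i) (hmono i) (hpos i)]
  have h12' : ∀ i : Fin p, a i i1 ≤ ε ^ 3 * a i i0 := by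
    intro i
    have h := h12 i
    rw [hk12eq i] at h
    have h0 : (0:ℝ) < a i i0 := lt_of_lt_of_le one_pos (ha0 i)
    rw [div_le_iff₀ (by positivity)] at h
    nlinarith [h0]
  -- the key estimate
  have hkey := key hd p hp1 ε hε0 hε4 G KK LL A
    (fun n hn => by simp only [hKK, dif_pos hn]; exact hk _)
    (fun n hn => by simp only [hLL, dif_pos hn]; exact hl _)
    (fun n hn => by simp only [hG, hKK, hLL, hA, dif_pos hn]; exact hdecomp _)
    (fun n hn => by simp only [hA, dif_pos hn]; exact hmono _)
    (fun n hn => by simp only [hA, dif_pos hn]; exact hpos _)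
    (fun n hn => by simp only [hA, dif_pos hn]; exact ha0 _)
    (fun n hn => by simp only [hA, dif_pos hn]; exact h12' _)
    (fun n hn => by
      have hn' : n < p := by omega
      simp only [hKK, hLL, dif_pos hn, dif_pos hn']
      exact hδ₂ ⟨n, hn'⟩ hn)
  -- Qprod equals the reversed list product
  have hQaux : ∀ n ≤ p, ((List.ofFn g).take n).reverse.prod = Qprod G n := by
    intro n
    induction n with
    | zero => intro _; simp [Qprod]
    | succ m ihm =>
      intro hmp
      have hm : m < p := by omega
      have hget : (List.ofFn g)[m]? = some (g ⟨m, hm⟩) := by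
        rw [List.getElem?_eq_getElem (by simpa using hm)]
        simp
      rw [List.take_succ, hget]
      simp only [Option.toList_some, List.reverse_append, List.reverse_singleton,
        List.singleton_append, List.prod_cons]
      rw [ihm (by omega), Qprod_succ]
      congr 1
      simp only [hG, dif_pos hm]
  have hQ : Qprod G p = (List.ofFn g).reverse.prod := by
    rw [← hQaux p le_rfl]
    congr 1
    rw [List.take_of_length_le (by simp)]
  -- norm of the test vector
  have hL0 : LL 0 ∈ Matrix.orthogonalGroup (Fin d) ℝ := by
    simp only [hLL, dif_pos (show 0 < p by omega)]; exact hl _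
  have hvnorm : ‖op (LL 0)ᵀ (EuclideanSpace.single i0 (1:ℝ))‖ = 1 := by
    rw [norm_op_orth (transpose_mem hL0), EuclideanSpace.norm_single, norm_one]
  -- products over Fin p vs range p
  have hprod_eq : ∏ j ∈ Finset.range p, A j i0 = ∏ i : Fin p, kappa1 (g i) := by
    rw [← Fin.prod_univ_eq_prod_range (fun j => A j i0) p]
    apply Finset.prod_congr rfl
    intro i _
    rw [hk1eq i]
    simp only [hA, dif_pos i.isLt]
  have hNlow : ε ^ (p - 1) * ∏ j ∈ Finset.range p, A j i0 ≤ ‖op (Qprod G p)‖ := by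
    calc ε ^ (p - 1) * ∏ j ∈ Finset.range p, A j i0
        ≤ ‖op (Qprod G p) (op (LL 0)ᵀ (EuclideanSpace.single i0 1))‖ := hkey
      _ ≤ ‖op (Qprod G p)‖ * ‖op (LL 0)ᵀ (EuclideanSpace.single i0 (1:ℝ))‖ :=
          ContinuousLinearMap.le_opNorm _ _
      _ = ‖op (Qprod G p)‖ := by rw [hvnorm, mul_one]
  have hc1 : ε ^ (p - 1) * ∏ i : Fin p, kappa1 (g i) ≤ kappa1 ((List.ofFn g).reverse.prod) := by
    rw [← hprod_eq, kappa1, ← hQ]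
    exact hNlow
  refine ⟨hc1, ?_⟩
  -- second estimate
  have hPpos : (0:ℝ) < ∏ j ∈ Finset.range p, A j i0 := by
    apply Finset.prod_pos
    intro j hj
    have hjp : j < p := Finset.mem_range.mp hj
    have := ha0 ⟨j, hjp⟩
    simp only [hA, dif_pos hjp]
    linarith
  have hSbound : ∀ n ≤ p, Sfn (Qprod G n) ≤ ∏ j ∈ Finset.range n, (A j i0 * A j i1) := by
    intro n
    induction n with
    | zero =>
      intro _
      have h1 : Sfn (Qprod G 0) ≤ 1 := by
        apply Sfn_le zero_le_one
        intro x y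
        rw [show Qprod G 0 = (1 : Matrix (Fin d) (Fin d) ℝ) from rfl, op_one]
        simp
      simpa using h1
    | succ m ihm =>
      intro hmp
      have hm : m < p := by omega
      have hSG : Sfn (G m) = A m i0 * A m i1 := by
        simp only [hG, hA, dif_pos hm]
        rw [hdecomp ⟨m, hm⟩, Sfn_cartan hd _ (hk _) (hl _) (hmono _) (hpos _)]
      have hApos : (0:ℝ) ≤ A m i0 * A m i1 := by
        simp only [hA, dif_pos hm]
        exact mul_nonneg (hpos _ _) (hpos _ _)
      rw [Qprod_succ, Finset.prod_range_succ]
      calc Sfn (G m * Qprod G m) ≤ Sfn (G m) * Sfn (Qprod G m) := Sfn_submul _ _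
        _ ≤ (A m i0 * A m i1) * ∏ j ∈ Finset.range m, (A j i0 * A j i1) := by
            rw [hSG]
            exact mul_le_mul_of_nonneg_left (ihm (by omega)) hApos
        _ = (∏ j ∈ Finset.range m, (A j i0 * A j i1)) * (A m i0 * A m i1) := by ring
  have hNpos : 0 < ‖op (Qprod G p)‖ := lt_of_lt_of_le (by positivity) hNlow
  have hbound : kappa12 ((List.ofFn g).reverse.prod)
      ≤ (∏ j ∈ Finset.range p, (A j i0 * A j i1))
        / (ε ^ (p - 1) * ∏ j ∈ Finset.range p, A j i0) ^ 2 := by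
    rw [← hQ, kappa12_eq_Sfn]
    apply div_le_div₀ (Finset.prod_nonneg fun j hj => by
        have hjp : j < p := Finset.mem_range.mp hj
        simp only [hA, dif_pos hjp]
        exact mul_nonneg (hpos _ _) (hpos _ _))
      (hSbound p le_rfl) (by positivity)
      (sq_le_sq'' (by positivity) hNlow)
  -- rewrite the right-hand side
  have hk12prod : ∏ i : Fin p, kappa12 (g i)
      = (∏ j ∈ Finset.range p, (A j i0 * A j i1)) / (∏ j ∈ Finset.range p, A j i0) ^ 2 := by
    have h1 : ∏ i : Fin p, kappa12 (g i)
        = ∏ i : Fin p, ((a i i0 * a i i1) / (a i i0) ^ 2) :=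
      Finset.prod_congr rfl fun i _ => hk12eq i
    rw [h1, Finset.prod_div_distrib, Finset.prod_pow]
    congr 1
    · rw [← Fin.prod_univ_eq_prod_range (fun j => A j i0 * A j i1) p]
      apply Finset.prod_congr rfl
      intro i _
      simp only [hA, dif_pos i.isLt]
    · congr 1
      rw [← Fin.prod_univ_eq_prod_range (fun j => A j i0) p]
      apply Finset.prod_congr rfl
      intro i _
      simp only [hA, dif_pos i.isLt]
  calc kappa12 ((List.ofFn g).reverse.prod)
      ≤ (∏ j ∈ Finset.range p, (A j i0 * A j i1))
        / (ε ^ (p - 1) * ∏ j ∈ Finset.range p, A j i0) ^ 2 := hbound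
    _ = (∏ i : Fin p, kappa12 (g i)) / ε ^ (2 * (p - 1)) := by
        rw [hk12prod]
        have hεne : (ε : ℝ) ≠ 0 := ne_of_gt hε0
        have hPne : (∏ j ∈ Finset.range p, A j i0) ≠ 0 := ne_of_gt hPpos
        have hpow : (ε ^ (p - 1)) ^ 2 = ε ^ (2 * (p - 1)) := by
          rw [← pow_mul, Nat.mul_comm]
        rw [div_div, mul_pow, hpow,
          mul_comm (ε ^ (2*(p-1))) ((∏ j ∈ Finset.range p, A j i0) ^ 2)]
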